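/- No nonzero element of the kernel of D is divisible by v; that is, if f ∈ K[x,s,t,u,v] satisfies D(v·f) = 0 then f = 0, where D = x³·∂/∂s + s·∂/∂t + t·∂/∂u + x²·∂/∂v. -/

import Mathlib

open MvPolynomial

/-- The derivation `D = x³ ∂/∂s + s ∂/∂t + t ∂/∂u + x² ∂/∂v` on `K[x,s,t,u,v]`,
where `x, s, t, u, v` are `X 0, X 1, X 2, X 3, X 4`. -/
noncomputable def D (K : Type*) [Field K] [CharZero K] :
    Derivation K (MvPolynomial (Fin 5) K) (MvPolynomial (Fin 5) K) :=
  mkDerivation K ![0, X 0 ^ 3, X 1, X 2, X 0 ^ 2]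

lemma D_X4 (K : Type*) [Field K] [CharZero K] : D K (X (4 : Fin 5)) = X 0 ^ 2 := by
  simp [D, mkDerivation_X]

lemma prime_X4 (K : Type*) [Field K] [CharZero K] :
    Prime (X (4 : Fin 5) : MvPolynomial (Fin 5) K) := by
  rw [← MulEquiv.prime_iff (((renameEquiv K (Equiv.swap (0 : Fin 5) 4)).trans
      (finSuccEquiv K 4)).toRingEquiv.toMulEquiv)]
  have : (((renameEquiv K (Equiv.swap (0 : Fin 5) 4)).trans
      (finSuccEquiv K 4)).toRingEquiv.toMulEquiv) (X (4 : Fin 5)) = Polynomial.X := by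
    simp [finSuccEquiv_X_zero]
  rw [this]
  exact Polynomial.prime_X

lemma not_dvd_coeff (K : Type*) [Field K] [CharZero K] (n : ℕ) (hn : 0 < n) :
    ¬ (X (4 : Fin 5) : MvPolynomial (Fin 5) K) ∣ (n : MvPolynomial (Fin 5) K) * X 0 ^ 2 := by
  intro hd
  have := map_dvd (eval (fun i : Fin 5 => if i = 0 then (1 : K) else 0)) hd
  simp at this
  omega

lemma key (K : Type*) [Field K] [CharZero K] :
    ∀ N : ℕ, ∀ f : MvPolynomial (Fin 5) K, f.degreeOf 4 = N → ∀ n : ℕ, 0 < n →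
      (n : MvPolynomial (Fin 5) K) * X 0 ^ 2 * f + X 4 * D K f = 0 → f = 0 := by
  intro N
  induction N using Nat.strong_induction_on with
  | _ N ih =>
    intro f hdeg n hn heq
    by_contra hf
    have hdvd : (X (4 : Fin 5) : MvPolynomial (Fin 5) K) ∣
        ((n : MvPolynomial (Fin 5) K) * X 0 ^ 2) * f :=
      ⟨-(D K f), by linear_combination heq⟩
    have hvf : (X (4 : Fin 5) : MvPolynomial (Fin 5) K) ∣ f :=
      ((prime_X4 K).2.2 _ _ hdvd).resolve_left (not_dvd_coeff K n hn)
    obtain ⟨g, hfg⟩ := hvf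
    have hg : g ≠ 0 := fun h0 => hf (by simp [hfg, h0])
    have hDf : D K f = X 4 * D K g + X 0 ^ 2 * g := by
      rw [hfg, Derivation.leibniz, smul_eq_mul, smul_eq_mul, D_X4]; ring
    have h2 : ((n + 1 : ℕ) : MvPolynomial (Fin 5) K) * X 0 ^ 2 * g + X 4 * D K g = 0 := by
      have hX : (X (4 : Fin 5) : MvPolynomial (Fin 5) K) ≠ 0 := X_ne_zero 4
      have hz : X (4 : Fin 5) *
          (((n + 1 : ℕ) : MvPolynomial (Fin 5) K) * X 0 ^ 2 * g + X 4 * D K g) = 0 := by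
        rw [hDf, hfg] at heq
        push_cast
        linear_combination heq
      exact (mul_eq_zero.mp hz).resolve_left hX
    have hdg : g.degreeOf 4 < N := by
      have h1 : (g * X (4 : Fin 5)).degreeOf 4 = g.degreeOf 4 + 1 :=
        (degreeOf_mul_X_eq_degreeOf_add_one_iff 4 g).mpr hg
      have : f.degreeOf 4 = g.degreeOf 4 + 1 := by rw [hfg, mul_comm]; exact h1
      omega
    exact hg (ih _ hdg g rfl (n + 1) (by omega) h2)

/-- No nonzero element of `ker D` is divisible by `v`: if `D(v f) = 0` then `f = 0`. -/
theorem no_invariant_divisible_by_v (K : Type*) [Field K] [CharZero K]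
    (f : MvPolynomial (Fin 5) K) (h : D K (X 4 * f) = 0) : f = 0 := by
  have hDf : D K (X 4 * f) = X 4 * D K f + X 0 ^ 2 * f := by
    rw [Derivation.leibniz, smul_eq_mul, smul_eq_mul, D_X4]; ring
  apply key K (f.degreeOf 4) f rfl 1 one_pos
  push_cast
  linear_combination hDf.symm.trans h
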